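/- arXiv:1601.06055 — 2 statements merged into one kernel-verified Lean document; each statement's English description precedes it below -/
import Mathlib

section
/- Let X and Z be finite nonempty sets, C ⊆ X with |C| = K·M for positive integers K, M, P_X the uniform distribution on C, P_{Z|X} a channel from X to Z, P_{XZ} := P_X × P_{Z|X} with output marginal P_Z, and let π₀ : C → {1,…,M} have all fibers of size K. Let σ be a uniformly random permutation of C and Π := π₀ ∘ σ. Then for every γ > 0 and every PMF Q_Z on Z with Q_Z(z) > 0 for all z: E_σ[ d(P_{Π(X)Z}, Unif_M × P_Z) ] ≤ E_γ(P_{XZ}, P_X × Q_Z) + (1/2)·√( (γ/K)·Σ_{x∈C,z∈Z} P_{XZ}(x,z)·exp(−|ln(P_{Z|X}(z|x)/Q_Z(z)) − ln γ|) ), where for each fixed σ, P_{Π(X)Z}(m,z) := Σ_{x∈C : π₀(σ(x)) = m} P_X(x)·P_{Z|X}(z|x), Unif_M is the uniform PMF on {1,…,M}, and summands with P_{XZ}(x,z) = 0 read as 0. -/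
open scoped Classical
open Finset

noncomputable section

def IsPMF {A : Type*} [Fintype A] (P : A → ℝ) : Prop :=
  (∀ a, 0 ≤ P a) ∧ ∑ a, P a = 1

def dTV {A : Type*} [Fintype A] (P Q : A → ℝ) : ℝ :=
  (1 / 2) * ∑ a, |P a - Q a|

def Egam {A : Type*} [Fintype A] (γ : ℝ) (P Q : A → ℝ) : ℝ :=
  ∑ a ∈ Finset.univ.filter (fun a => γ * Q a ≤ P a), (P a - γ * Q a)

section AuxPerm

lemma aux_cs_sqrt {ι : Type*} (s : Finset ι) (f w : ι → ℝ) (hw : ∀ i ∈ s, 0 < w i)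
    (hws : ∑ i ∈ s, w i = 1) :
    ∑ i ∈ s, |f i| ≤ Real.sqrt (∑ i ∈ s, (f i)^2 / w i) := by
  have h := Finset.sum_mul_sq_le_sq_mul_sq s (fun i => Real.sqrt (w i))
      (fun i => |f i| / Real.sqrt (w i))
  have h1 : ∀ i ∈ s, Real.sqrt (w i) * (|f i| / Real.sqrt (w i)) = |f i| := by
    intro i hi
    rw [mul_div_cancel₀]
    exact ne_of_gt (Real.sqrt_pos.2 (hw i hi))
  have h2 : ∀ i ∈ s, (Real.sqrt (w i))^2 = w i := fun i hi => Real.sq_sqrt (hw i hi).le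
  have h3 : ∀ i ∈ s, (|f i| / Real.sqrt (w i))^2 = (f i)^2 / w i := by
    intro i hi
    rw [div_pow, sq_abs, h2 i hi]
  rw [Finset.sum_congr rfl h1, Finset.sum_congr rfl h2, Finset.sum_congr rfl h3, hws, one_mul] at h
  have hnn : 0 ≤ ∑ i ∈ s, |f i| := Finset.sum_nonneg fun i _ => abs_nonneg _
  have hy : 0 ≤ ∑ i ∈ s, (f i)^2 / w i := Finset.sum_nonneg fun i hi => div_nonneg (sq_nonneg _) (hw i hi).le
  exact (Real.le_sqrt hnn hy).2 h

lemma aux_sum_sqrt {ι : Type*} (s : Finset ι) (g : ι → ℝ) (hg : ∀ i ∈ s, 0 ≤ g i) :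
    ∑ i ∈ s, Real.sqrt (g i) ≤ Real.sqrt ((s.card : ℝ) * ∑ i ∈ s, g i) := by
  have h := Finset.sum_mul_sq_le_sq_mul_sq s (fun _ => (1:ℝ)) (fun i => Real.sqrt (g i))
  simp only [one_mul, one_pow, Finset.sum_const, nsmul_eq_mul, mul_one] at h
  have h2 : ∀ i ∈ s, (Real.sqrt (g i))^2 = g i := fun i hi => Real.sq_sqrt (hg i hi)
  rw [Finset.sum_congr rfl h2] at h
  have hnn : 0 ≤ ∑ i ∈ s, Real.sqrt (g i) := Finset.sum_nonneg fun i _ => Real.sqrt_nonneg _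
  have hy : (0:ℝ) ≤ (s.card : ℝ) * ∑ i ∈ s, g i :=
    mul_nonneg (Nat.cast_nonneg _) (Finset.sum_nonneg hg)
  exact (Real.le_sqrt hnn hy).2 h

lemma aux_min_sq (γ q w : ℝ) (hγ : 0 < γ) (hq : 0 < q) (hw : 0 ≤ w) :
    (min w (γ*q))^2 = γ * q * w * Real.exp (-|Real.log (w/q) - Real.log γ|) := by
  rcases eq_or_lt_of_le hw with h0 | hwp
  · rw [← h0]
    simp [min_eq_left (by positivity : (0:ℝ) ≤ γ * q)]
  · have hlog : Real.log (w/q) - Real.log γ = Real.log (w/(γ*q)) := by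
      rw [Real.log_div (ne_of_gt hwp) (ne_of_gt hq), Real.log_div (ne_of_gt hwp) (by positivity),
        Real.log_mul (ne_of_gt hγ) (ne_of_gt hq)]
      ring
    rw [hlog]
    rcases le_or_gt (γ*q) w with hle | hlt
    · have ht1 : 1 ≤ w/(γ*q) := (one_le_div (by positivity)).2 hle
      rw [abs_of_nonneg (Real.log_nonneg ht1), min_eq_right hle, Real.exp_neg,
        Real.exp_log (by positivity)]
      field_simp
    · have ht1 : w/(γ*q) < 1 := (div_lt_one (by positivity)).2 hlt
      rw [abs_of_nonpos (Real.log_nonpos (by positivity) ht1.le), neg_neg,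
        Real.exp_log (by positivity), min_eq_left hlt.le]
      field_simp

variable {α : Type*} [Fintype α] [DecidableEq α]

lemma perm_fiber_card_eq (c a b : α) :
    (univ.filter fun σ : Equiv.Perm α => σ c = a).card
      = (univ.filter fun σ : Equiv.Perm α => σ c = b).card := by
  apply Finset.card_bij (fun σ _ => Equiv.swap a b * σ)
  · intro σ hσ
    simp only [mem_filter, mem_univ, true_and] at hσ ⊢
    simp [Equiv.Perm.mul_apply, hσ]
  · intro σ hσ τ hτ h
    exact mul_left_cancel h
  · intro τ hτ
    simp only [mem_filter, mem_univ, true_and] at hτ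
    refine ⟨Equiv.swap a b * τ, ?_, ?_⟩
    · simp only [mem_filter, mem_univ, true_and]
      simp [Equiv.Perm.mul_apply, hτ]
    · rw [← mul_assoc, Equiv.swap_mul_self, one_mul]

lemma perm_fiber_card (c a : α) :
    (univ.filter fun σ : Equiv.Perm α => σ c = a).card * Fintype.card α
      = (Fintype.card α).factorial := by
  have hpart : (univ : Finset (Equiv.Perm α)).card
      = ∑ b : α, (univ.filter fun σ : Equiv.Perm α => σ c = b).card :=
    Finset.card_eq_sum_card_fiberwise (fun σ _ => Finset.mem_univ (σ c))
  have hconst : ∀ b : α, (univ.filter fun σ : Equiv.Perm α => σ c = b).card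
      = (univ.filter fun σ : Equiv.Perm α => σ c = a).card :=
    fun b => perm_fiber_card_eq c b a
  rw [Finset.sum_congr rfl (fun b _ => hconst b), Finset.sum_const,
    smul_eq_mul, Finset.card_univ] at hpart
  rw [Finset.card_univ] at hpart
  rw [mul_comm, ← hpart, Fintype.card_perm]

lemma perm_pair_card_eq {c c' : α} (a : α) {b b' : α} (hb : b ≠ a) (hb' : b' ≠ a) :
    (univ.filter fun σ : Equiv.Perm α => σ c = a ∧ σ c' = b).card
      = (univ.filter fun σ : Equiv.Perm α => σ c = a ∧ σ c' = b').card := by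
  apply Finset.card_bij (fun σ _ => Equiv.swap b b' * σ)
  · intro σ hσ
    simp only [mem_filter, mem_univ, true_and] at hσ ⊢
    obtain ⟨h1, h2⟩ := hσ
    constructor
    · simp [Equiv.Perm.mul_apply, h1, Equiv.swap_apply_of_ne_of_ne hb.symm hb'.symm]
    · simp [Equiv.Perm.mul_apply, h2]
  · intro σ hσ τ hτ h
    exact mul_left_cancel h
  · intro τ hτ
    simp only [mem_filter, mem_univ, true_and] at hτ
    obtain ⟨h1, h2⟩ := hτ
    refine ⟨Equiv.swap b b' * τ, ?_, ?_⟩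
    · simp only [mem_filter, mem_univ, true_and]
      constructor
      · simp [Equiv.Perm.mul_apply, h1, Equiv.swap_apply_of_ne_of_ne hb.symm hb'.symm]
      · simp [Equiv.Perm.mul_apply, h2]
    · rw [← mul_assoc, Equiv.swap_mul_self, one_mul]

lemma perm_pair_card {c c' : α} (hcc : c ≠ c') {a b : α} (hab : b ≠ a) :
    (univ.filter fun σ : Equiv.Perm α => σ c = a ∧ σ c' = b).card
        * ((Fintype.card α - 1) * Fintype.card α)
      = (Fintype.card α).factorial := by
  have hpart : (univ.filter fun σ : Equiv.Perm α => σ c = a).card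
      = ∑ b' : α, ((univ.filter fun σ : Equiv.Perm α => σ c = a).filter
          fun σ => σ c' = b').card :=
    Finset.card_eq_sum_card_fiberwise (fun σ _ => Finset.mem_univ (σ c'))
  have hff : ∀ b' : α, ((univ.filter fun σ : Equiv.Perm α => σ c = a).filter
      fun σ => σ c' = b') = (univ.filter fun σ : Equiv.Perm α => σ c = a ∧ σ c' = b') := by
    intro b'; rw [Finset.filter_filter]
  have hzero : ((univ.filter fun σ : Equiv.Perm α => σ c = a ∧ σ c' = a)).card = 0 := by
    rw [Finset.card_eq_zero, Finset.filter_eq_empty_iff]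
    rintro σ - ⟨h1, h2⟩
    exact hcc (σ.injective (h1.trans h2.symm))
  have hsum : (univ.filter fun σ : Equiv.Perm α => σ c = a).card
      = ∑ b' ∈ univ.erase a, (univ.filter fun σ : Equiv.Perm α => σ c = a ∧ σ c' = b').card := by
    rw [hpart, Finset.sum_congr rfl (fun b' _ => by rw [hff])]
    rw [← Finset.sum_erase_add _ _ (Finset.mem_univ a), hzero, add_zero]
  have hconst : ∀ b' ∈ univ.erase a,
      (univ.filter fun σ : Equiv.Perm α => σ c = a ∧ σ c' = b').card
      = (univ.filter fun σ : Equiv.Perm α => σ c = a ∧ σ c' = b).card := by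
    intro b' hb'
    exact perm_pair_card_eq a (Finset.ne_of_mem_erase hb') hab
  rw [Finset.sum_congr rfl hconst, Finset.sum_const, smul_eq_mul,
    Finset.card_erase_of_mem (Finset.mem_univ a), Finset.card_univ] at hsum
  rw [← mul_assoc, mul_comm _ (Fintype.card α - 1), ← hsum]
  exact perm_fiber_card c a

lemma perm_memfiber_card (c : α) (A : Finset α) :
    (univ.filter fun σ : Equiv.Perm α => σ c ∈ A).card * Fintype.card α
      = A.card * (Fintype.card α).factorial := by
  have hpart : (univ.filter fun σ : Equiv.Perm α => σ c ∈ A).card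
      = ∑ a ∈ A, ((univ.filter fun σ : Equiv.Perm α => σ c ∈ A).filter
          fun σ => σ c = a).card :=
    Finset.card_eq_sum_card_fiberwise (fun σ hσ => (Finset.mem_filter.1 hσ).2)
  have hff : ∀ a ∈ A, ((univ.filter fun σ : Equiv.Perm α => σ c ∈ A).filter
      fun σ => σ c = a) = univ.filter fun σ : Equiv.Perm α => σ c = a := by
    intro a ha
    rw [Finset.filter_filter]
    apply Finset.filter_congr
    intro σ _
    constructor
    · exact fun h => h.2
    · exact fun h => ⟨h ▸ ha, h⟩
  rw [hpart, Finset.sum_congr rfl (fun a ha => by rw [hff a ha]), Finset.sum_mul]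
  rw [Finset.sum_congr rfl (fun a _ => perm_fiber_card c a), Finset.sum_const, smul_eq_mul]

lemma perm_pairset_card {c c' : α} (hcc : c ≠ c') (A : Finset α) :
    (univ.filter fun σ : Equiv.Perm α => σ c ∈ A ∧ σ c' ∈ A).card
        * ((Fintype.card α - 1) * Fintype.card α)
      = A.card * (A.card - 1) * (Fintype.card α).factorial := by
  have hpart : (univ.filter fun σ : Equiv.Perm α => σ c ∈ A ∧ σ c' ∈ A).card
      = ∑ p ∈ A ×ˢ A, ((univ.filter fun σ : Equiv.Perm α => σ c ∈ A ∧ σ c' ∈ A).filter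
          fun σ => (σ c, σ c') = p).card :=
    Finset.card_eq_sum_card_fiberwise (fun σ hσ => by
      have h := (Finset.mem_filter.1 hσ).2
      exact Finset.mem_product.2 ⟨h.1, h.2⟩)
  have hff : ∀ p ∈ A ×ˢ A, ((univ.filter fun σ : Equiv.Perm α => σ c ∈ A ∧ σ c' ∈ A).filter
      fun σ => (σ c, σ c') = p) = univ.filter fun σ : Equiv.Perm α => σ c = p.1 ∧ σ c' = p.2 := by
    intro p hp
    obtain ⟨hp1, hp2⟩ := Finset.mem_product.1 hp
    rw [Finset.filter_filter]
    apply Finset.filter_congr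
    intro σ _
    constructor
    · intro h
      have := h.2
      rw [Prod.ext_iff] at this
      exact this
    · intro h
      exact ⟨⟨h.1 ▸ hp1, h.2 ▸ hp2⟩, Prod.ext h.1 h.2⟩
  rw [hpart, Finset.sum_congr rfl (fun p hp => by rw [hff p hp]), Finset.sum_product]
  have hdiag : ∀ a ∈ A, (univ.filter fun σ : Equiv.Perm α => σ c = a ∧ σ c' = a).card = 0 := by
    intro a _
    rw [Finset.card_eq_zero, Finset.filter_eq_empty_iff]
    rintro σ - ⟨h1, h2⟩
    exact hcc (σ.injective (h1.trans h2.symm))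
  have hinner : ∀ a ∈ A, (∑ b ∈ A, (univ.filter fun σ : Equiv.Perm α => σ c = a ∧ σ c' = b).card)
      * ((Fintype.card α - 1) * Fintype.card α) = (A.card - 1) * (Fintype.card α).factorial := by
    intro a ha
    rw [← Finset.sum_erase_add _ _ ha, hdiag a ha, add_zero, Finset.sum_mul]
    rw [Finset.sum_congr rfl (fun b hb => perm_pair_card hcc (Finset.ne_of_mem_erase hb)),
      Finset.sum_const, smul_eq_mul, Finset.card_erase_of_mem ha]
  rw [Finset.sum_mul, Finset.sum_congr rfl hinner, Finset.sum_const, smul_eq_mul, mul_assoc]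

lemma perm_second_moment [Nonempty α] (A : Finset α) (f : α → ℝ) (hf : ∀ c, 0 ≤ f c) :
    ∑ σ : Equiv.Perm α,
        ((∑ c, if σ c ∈ A then f c else 0)
          - (A.card : ℝ) / (Fintype.card α) * ∑ c, f c) ^ 2
      ≤ ((Fintype.card α).factorial : ℝ) * ((A.card : ℝ) / Fintype.card α) * ∑ c, (f c)^2 := by
  set n := Fintype.card α with hn
  have hnpos : 0 < n := Fintype.card_pos
  have hnR : (0:ℝ) < n := by exact_mod_cast hnpos
  set Nf : ℝ := ((n.factorial : ℕ) : ℝ) with hNf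
  have hNfpos : (0:ℝ) < Nf := by rw [hNf]; exact_mod_cast n.factorial_pos
  set κ : ℝ := (A.card : ℝ) / n with hκ
  have hκnn : 0 ≤ κ := div_nonneg (Nat.cast_nonneg _) hnR.le
  set S : Equiv.Perm α → ℝ := fun σ => ∑ c, if σ c ∈ A then f c else 0 with hS
  set μ : ℝ := κ * ∑ c, f c with hμ
  show ∑ σ : Equiv.Perm α, (S σ - μ)^2 ≤ Nf * κ * ∑ c, (f c)^2
  have hone : ∀ c : α, (∑ σ : Equiv.Perm α, if σ c ∈ A then (1:ℝ) else 0) = κ * Nf := by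
    intro c
    rw [Finset.sum_boole, hκ, hNf, div_mul_eq_mul_div, eq_div_iff hnR.ne']
    have hm := perm_memfiber_card c A
    rw [← hn] at hm
    exact_mod_cast hm
  have hSsum : ∑ σ : Equiv.Perm α, S σ = Nf * μ := by
    rw [hS]
    rw [Finset.sum_comm]
    have h : ∀ c : α, (∑ σ : Equiv.Perm α, if σ c ∈ A then f c else 0) = f c * (κ * Nf) := by
      intro c
      rw [← hone c, Finset.mul_sum]
      exact Finset.sum_congr rfl fun σ _ => by split_ifs <;> simp
    rw [Finset.sum_congr rfl fun c _ => h c, ← Finset.sum_mul, hμ]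
    ring
  have hpair : ∀ c c' : α, c ≠ c' →
      (∑ σ : Equiv.Perm α, if σ c ∈ A ∧ σ c' ∈ A then (1:ℝ) else 0) ≤ κ^2 * Nf := by
    intro c c' hcc
    rw [Finset.sum_boole]
    rcases Nat.eq_zero_or_pos A.card with hA0 | hA1
    · have hAe : A = ∅ := Finset.card_eq_zero.1 hA0
      subst hAe
      simp only [Finset.notMem_empty, false_and, Finset.filter_false, Finset.card_empty,
        Nat.cast_zero]
      positivity
    · have hnt : Nontrivial α := ⟨⟨c, c', hcc⟩⟩
      have hn2 : 2 ≤ n := Fintype.one_lt_card_iff_nontrivial.2 hnt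
      have hcount := perm_pairset_card hcc A
      rw [← hn] at hcount
      have hAn : A.card ≤ n := by
        have h := Finset.card_le_univ A
        rwa [← hn] at h
      have hcast : ((univ.filter fun σ : Equiv.Perm α => σ c ∈ A ∧ σ c' ∈ A).card : ℝ)
          * (((n:ℝ) - 1) * n) = (A.card : ℝ) * ((A.card : ℝ) - 1) * Nf := by
        have := congrArg (Nat.cast : ℕ → ℝ) hcount
        push_cast [Nat.cast_sub hA1, Nat.cast_sub hnpos] at this
        linarith [this]
      set x : ℝ := ((univ.filter fun σ : Equiv.Perm α => σ c ∈ A ∧ σ c' ∈ A).card : ℝ) with hx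
      have hxnn : 0 ≤ x := Nat.cast_nonneg _
      have haR : (1:ℝ) ≤ (A.card : ℝ) := by exact_mod_cast hA1
      have hAnR : (A.card : ℝ) ≤ (n:ℝ) := by exact_mod_cast hAn
      have hn2R : (2:ℝ) ≤ (n:ℝ) := by exact_mod_cast hn2
      rw [hκ, div_pow, div_mul_eq_mul_div, le_div_iff₀ (by positivity)]
      nlinarith [hcast, mul_nonneg (mul_nonneg hxnn hnR.le) hnR.le,
        mul_nonneg (mul_nonneg (Nat.cast_nonneg A.card : (0:ℝ) ≤ A.card) hNfpos.le)
          (sub_nonneg.2 hAnR)]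
  have hterm : ∀ (σ : Equiv.Perm α) (c c' : α),
      (if σ c ∈ A then f c else 0) * (if σ c' ∈ A then f c' else 0)
        = f c * f c' * (if σ c ∈ A ∧ σ c' ∈ A then (1:ℝ) else 0) := by
    intro σ c c'
    by_cases h1 : σ c ∈ A <;> by_cases h2 : σ c' ∈ A <;> simp [h1, h2]
  have hswap : ∑ σ : Equiv.Perm α, (S σ)^2
      = ∑ c : α, ∑ c' : α, f c * f c' *
          (∑ σ : Equiv.Perm α, if σ c ∈ A ∧ σ c' ∈ A then (1:ℝ) else 0) := by
    have h : ∀ σ : Equiv.Perm α, (S σ)^2 = ∑ c : α, ∑ c' : α,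
        f c * f c' * (if σ c ∈ A ∧ σ c' ∈ A then (1:ℝ) else 0) := by
      intro σ
      rw [hS, sq, Finset.sum_mul_sum]
      exact Finset.sum_congr rfl fun c _ => Finset.sum_congr rfl fun c' _ => hterm σ c c'
    rw [Finset.sum_congr rfl fun σ _ => h σ, Finset.sum_comm]
    refine Finset.sum_congr rfl fun c _ => ?_
    rw [Finset.sum_comm]
    exact Finset.sum_congr rfl fun c' _ => by rw [Finset.mul_sum]
  have hS2 : ∑ σ : Equiv.Perm α, (S σ)^2 ≤ κ * Nf * (∑ c, (f c)^2) + Nf * μ^2 := by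
    rw [hswap]
    have hbound : ∀ c : α, ∑ c' : α, f c * f c' *
          (∑ σ : Equiv.Perm α, if σ c ∈ A ∧ σ c' ∈ A then (1:ℝ) else 0)
        ≤ (f c)^2 * (κ*Nf) + (∑ c' ∈ univ.erase c, f c * f c') * (κ^2*Nf) := by
      intro c
      rw [← Finset.add_sum_erase _ _ (Finset.mem_univ c), Finset.sum_mul]
      apply add_le_add
      · have hdiag : (∑ σ : Equiv.Perm α, if σ c ∈ A ∧ σ c ∈ A then (1:ℝ) else 0) = κ * Nf := by
          simp only [and_self]
          exact hone c
        rw [hdiag, sq]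
      · apply Finset.sum_le_sum
        intro c' hc'
        have hcc : c ≠ c' := fun h => (Finset.ne_of_mem_erase hc') h.symm
        exact mul_le_mul_of_nonneg_left (hpair c c' hcc) (mul_nonneg (hf c) (hf c'))
    calc ∑ c : α, ∑ c' : α, f c * f c' *
          (∑ σ : Equiv.Perm α, if σ c ∈ A ∧ σ c' ∈ A then (1:ℝ) else 0)
        ≤ ∑ c : α, ((f c)^2 * (κ*Nf) + (∑ c' ∈ univ.erase c, f c * f c') * (κ^2*Nf)) :=
          Finset.sum_le_sum fun c _ => hbound c
      _ ≤ κ * Nf * (∑ c, (f c)^2) + Nf * μ^2 := by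
          rw [Finset.sum_add_distrib, ← Finset.sum_mul, ← Finset.sum_mul]
          apply add_le_add
          · rw [mul_comm]
          · have h1 : ∑ c : α, ∑ c' ∈ univ.erase c, f c * f c'
                ≤ ∑ c : α, ∑ c' : α, f c * f c' := by
              apply Finset.sum_le_sum
              intro c _
              apply Finset.sum_le_sum_of_subset_of_nonneg (Finset.erase_subset _ _)
              intro c' _ _
              exact mul_nonneg (hf c) (hf c')
            have h2 : ∑ c : α, ∑ c' : α, f c * f c' = (∑ c, f c)^2 := by
              rw [sq, Finset.sum_mul_sum]
            have h3 : Nf * μ^2 = ((∑ c, f c)^2) * (κ^2 * Nf) := by rw [hμ]; ring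
            rw [h3]
            apply mul_le_mul_of_nonneg_right _ (by positivity)
            rw [← h2] at *
            linarith [h1]
  have hexp : ∑ σ : Equiv.Perm α, (S σ - μ)^2
      = (∑ σ : Equiv.Perm α, (S σ)^2) - 2*μ*(∑ σ : Equiv.Perm α, S σ) + Nf * μ^2 := by
    have h : ∀ σ : Equiv.Perm α, (S σ - μ)^2 = (S σ)^2 - 2*μ*(S σ) + μ^2 := fun σ => by ring
    rw [Finset.sum_congr rfl fun σ _ => h σ, Finset.sum_add_distrib, Finset.sum_sub_distrib,
      ← Finset.mul_sum, Finset.sum_const, Finset.card_univ, Fintype.card_perm, nsmul_eq_mul,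
      ← hn, ← hNf]
  rw [hexp, hSsum]
  nlinarith [hS2]

end AuxPerm

/-- Averaged privacy-amplification bound (Eq. (55)): the average over all
permutations `σ` of `C` of the secrecy `d(P_{Π(X)Z}, Unif_M × P_Z)` with
`Π = π₀ ∘ σ` is bounded by the `E_γ` term plus the square-root term. -/
theorem stmt14 {X Z : Type*} [Fintype X] [Fintype Z] [DecidableEq X]
    [Nonempty X] [Nonempty Z]
    (K M : ℕ) (hK : 0 < K) (hM : 0 < M)
    (C : Finset X) (hC : C.card = K * M)
    (PX : X → ℝ) (hPX : ∀ x, PX x = if x ∈ C then (((K * M : ℕ) : ℝ))⁻¹ else 0)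
    (Wch : X → Z → ℝ) (hW : ∀ x, IsPMF (Wch x))
    (π₀ : {x : X // x ∈ C} → Fin M)
    (hfib : ∀ m : Fin M,
      (Finset.univ.filter (fun c : {x : X // x ∈ C} => π₀ c = m)).card = K)
    (γ : ℝ) (hγ : 0 < γ)
    (QZ : Z → ℝ) (hQZ : IsPMF QZ) (hQZpos : ∀ z, 0 < QZ z) :
    (∑ σ : Equiv.Perm {x : X // x ∈ C},
        dTV (fun p : Fin M × Z =>
              ∑ c : {x : X // x ∈ C},
                if π₀ (σ c) = p.1 then PX c.1 * Wch c.1 p.2 else 0)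
            (fun p : Fin M × Z => ((M : ℝ))⁻¹ * ∑ x, PX x * Wch x p.2))
        / (((K * M).factorial : ℝ))
      ≤ Egam γ (fun p : X × Z => PX p.1 * Wch p.1 p.2)
            (fun p : X × Z => PX p.1 * QZ p.2)
        + (1 / 2) * Real.sqrt ((γ / K) *
            ∑ x ∈ C, ∑ z, PX x * Wch x z *
              Real.exp (-|Real.log (Wch x z / QZ z) - Real.log γ|)) := by
  classical
  set n := K * M with hnKM
  have hcard : Fintype.card {x : X // x ∈ C} = n := by rw [Fintype.card_coe, hC]
  have hnpos : 0 < n := Nat.mul_pos hK hM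
  have hnR : (0:ℝ) < (n:ℝ) := by exact_mod_cast hnpos
  have hMR : (0:ℝ) < (M:ℝ) := by exact_mod_cast hM
  have hKR : (0:ℝ) < (K:ℝ) := by exact_mod_cast hK
  have hne : Nonempty {x : X // x ∈ C} := by
    rw [← Fintype.card_pos_iff, hcard]; exact hnpos
  set Nf : ℝ := ((n.factorial : ℕ) : ℝ) with hNf
  have hNfpos : (0:ℝ) < Nf := by rw [hNf]; exact_mod_cast n.factorial_pos
  have hPXval : ∀ c : {x : X // x ∈ C}, PX c.1 = ((n:ℕ):ℝ)⁻¹ := by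
    intro c; rw [hPX]; simp [c.2, hnKM]
  have hWnn : ∀ x z, 0 ≤ Wch x z := fun x => (hW x).1
  set T : {x : X // x ∈ C} → Z → ℝ := fun c z => min (Wch c.1 z) (γ * QZ z) with hT
  set R : {x : X // x ∈ C} → Z → ℝ := fun c z => Wch c.1 z - T c z with hR
  have hTnn : ∀ c z, 0 ≤ T c z := fun c z =>
    le_min (hWnn c.1 z) (mul_nonneg hγ.le (hQZpos z).le)
  have hRnn : ∀ c z, 0 ≤ R c z := fun c z => sub_nonneg.2 (min_le_left _ _)
  set EgV : ℝ := ∑ c : {x : X // x ∈ C}, ∑ z, ((n:ℕ):ℝ)⁻¹ * R c z with hEgV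
  set D : Equiv.Perm {x : X // x ∈ C} → Fin M → Z → ℝ := fun σ m z =>
    (∑ c : {x : X // x ∈ C}, if π₀ (σ c) = m then ((n:ℕ):ℝ)⁻¹ * T c z else 0)
      - ((M : ℝ))⁻¹ * ∑ c : {x : X // x ∈ C}, ((n:ℕ):ℝ)⁻¹ * T c z with hD
  set Stot : ℝ := ∑ c : {x : X // x ∈ C}, ∑ z, Wch c.1 z *
      Real.exp (-|Real.log (Wch c.1 z / QZ z) - Real.log γ|) with hStot
  have hStotnn : 0 ≤ Stot := by
    rw [hStot]
    refine Finset.sum_nonneg fun c _ => Finset.sum_nonneg fun z _ => ?_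
    exact mul_nonneg (hWnn c.1 z) (Real.exp_nonneg _)
  -- Claim 1
  have claim1 : Egam γ (fun p : X × Z => PX p.1 * Wch p.1 p.2)
      (fun p : X × Z => PX p.1 * QZ p.2) = EgV := by
    rw [Egam, Finset.sum_filter]
    have hmax : ∀ p : X × Z,
        (if γ * (PX p.1 * QZ p.2) ≤ PX p.1 * Wch p.1 p.2
          then PX p.1 * Wch p.1 p.2 - γ * (PX p.1 * QZ p.2) else 0)
        = max (PX p.1 * Wch p.1 p.2 - γ * (PX p.1 * QZ p.2)) 0 := by
      intro p
      split_ifs with h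
      · rw [max_eq_left (sub_nonneg.2 h)]
      · rw [max_eq_right (sub_nonpos.2 (le_of_not_ge h))]
    rw [Finset.sum_congr rfl fun p _ => hmax p, Fintype.sum_prod_type]
    have hvanish : ∀ x ∈ (univ : Finset X), x ∉ C →
        (∑ z, max (PX x * Wch x z - γ * (PX x * QZ z)) 0) = 0 := by
      intro x _ hx
      have h0 : PX x = 0 := by rw [hPX]; simp [hx]
      simp [h0]
    rw [← Finset.sum_subset (Finset.subset_univ C) hvanish, ← Finset.sum_coe_sort C, hEgV]
    refine Finset.sum_congr rfl fun c _ => Finset.sum_congr rfl fun z _ => ?_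
    rw [hPXval c]
    simp only [hR, hT]
    have hinv : (0:ℝ) ≤ ((n:ℕ):ℝ)⁻¹ := inv_nonneg.2 hnR.le
    rcases le_total (Wch c.1 z) (γ * QZ z) with h | h
    · rw [min_eq_left h, sub_self, mul_zero]
      apply max_eq_right
      nlinarith
    · rw [min_eq_right h]
      rw [max_eq_left (by nlinarith)]
      ring
  -- Claim 2
  have claim2 : ∀ σ : Equiv.Perm {x : X // x ∈ C},
      dTV (fun p : Fin M × Z =>
              ∑ c : {x : X // x ∈ C},
                if π₀ (σ c) = p.1 then PX c.1 * Wch c.1 p.2 else 0)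
            (fun p : Fin M × Z => ((M : ℝ))⁻¹ * ∑ x, PX x * Wch x p.2)
        ≤ EgV + (1/2) * ∑ m : Fin M, ∑ z, |D σ m z| := by
    intro σ
    have hpoint : ∀ (m : Fin M) (z : Z),
        |(∑ c : {x : X // x ∈ C}, if π₀ (σ c) = m then PX c.1 * Wch c.1 z else 0)
          - (M:ℝ)⁻¹ * ∑ x, PX x * Wch x z|
        ≤ |D σ m z| + ((∑ c : {x : X // x ∈ C},
              if π₀ (σ c) = m then ((n:ℕ):ℝ)⁻¹ * R c z else 0)
            + (M:ℝ)⁻¹ * ∑ c : {x : X // x ∈ C}, ((n:ℕ):ℝ)⁻¹ * R c z) := by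
      intro m z
      have hsplit1 : (∑ c : {x : X // x ∈ C}, if π₀ (σ c) = m then PX c.1 * Wch c.1 z else 0)
          = (∑ c : {x : X // x ∈ C}, if π₀ (σ c) = m then ((n:ℕ):ℝ)⁻¹ * T c z else 0)
            + (∑ c : {x : X // x ∈ C}, if π₀ (σ c) = m then ((n:ℕ):ℝ)⁻¹ * R c z else 0) := by
        rw [← Finset.sum_add_distrib]
        refine Finset.sum_congr rfl fun c _ => ?_
        rw [hPXval c]
        split_ifs with h
        · simp only [hR]; ring
        · rw [add_zero]
      have hsplit2 : (∑ x, PX x * Wch x z)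
          = (∑ c : {x : X // x ∈ C}, ((n:ℕ):ℝ)⁻¹ * T c z)
            + (∑ c : {x : X // x ∈ C}, ((n:ℕ):ℝ)⁻¹ * R c z) := by
        rw [← Finset.sum_add_distrib]
        have hvan : ∀ x ∈ (univ : Finset X), x ∉ C → PX x * Wch x z = 0 := by
          intro x _ hx
          rw [hPX]; simp [hx]
        rw [← Finset.sum_subset (Finset.subset_univ C) hvan, ← Finset.sum_coe_sort C]
        refine Finset.sum_congr rfl fun c _ => ?_
        rw [hPXval c]
        simp only [hR]; ring
      have hEnn : 0 ≤ (∑ c : {x : X // x ∈ C},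
          if π₀ (σ c) = m then ((n:ℕ):ℝ)⁻¹ * R c z else 0) := by
        refine Finset.sum_nonneg fun c _ => ?_
        split_ifs with h
        · exact mul_nonneg (inv_nonneg.2 hnR.le) (hRnn c z)
        · exact le_rfl
      have hFnn : 0 ≤ (M:ℝ)⁻¹ * ∑ c : {x : X // x ∈ C}, ((n:ℕ):ℝ)⁻¹ * R c z := by
        refine mul_nonneg (inv_nonneg.2 hMR.le) (Finset.sum_nonneg fun c _ => ?_)
        exact mul_nonneg (inv_nonneg.2 hnR.le) (hRnn c z)
      rw [hsplit1, hsplit2]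
      have heq : (∑ c : {x : X // x ∈ C}, if π₀ (σ c) = m then ((n:ℕ):ℝ)⁻¹ * T c z else 0)
            + (∑ c : {x : X // x ∈ C}, if π₀ (σ c) = m then ((n:ℕ):ℝ)⁻¹ * R c z else 0)
            - (M:ℝ)⁻¹ * ((∑ c : {x : X // x ∈ C}, ((n:ℕ):ℝ)⁻¹ * T c z)
              + (∑ c : {x : X // x ∈ C}, ((n:ℕ):ℝ)⁻¹ * R c z))
          = D σ m z + ((∑ c : {x : X // x ∈ C},
                if π₀ (σ c) = m then ((n:ℕ):ℝ)⁻¹ * R c z else 0)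
              - (M:ℝ)⁻¹ * ∑ c : {x : X // x ∈ C}, ((n:ℕ):ℝ)⁻¹ * R c z) := by
        simp only [hD]; ring
      rw [heq]
      calc |D σ m z + ((∑ c : {x : X // x ∈ C},
                if π₀ (σ c) = m then ((n:ℕ):ℝ)⁻¹ * R c z else 0)
              - (M:ℝ)⁻¹ * ∑ c : {x : X // x ∈ C}, ((n:ℕ):ℝ)⁻¹ * R c z)|
          ≤ |D σ m z| + |(∑ c : {x : X // x ∈ C},
                if π₀ (σ c) = m then ((n:ℕ):ℝ)⁻¹ * R c z else 0)
              - (M:ℝ)⁻¹ * ∑ c : {x : X // x ∈ C}, ((n:ℕ):ℝ)⁻¹ * R c z| := abs_add_le _ _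
        _ ≤ |D σ m z| + ((∑ c : {x : X // x ∈ C},
                if π₀ (σ c) = m then ((n:ℕ):ℝ)⁻¹ * R c z else 0)
              + (M:ℝ)⁻¹ * ∑ c : {x : X // x ∈ C}, ((n:ℕ):ℝ)⁻¹ * R c z) := by
            apply add_le_add_right
            apply abs_le.2
            constructor <;> linarith
      -- end hpoint
    have hEsum : (∑ m : Fin M, ∑ z, ∑ c : {x : X // x ∈ C},
        if π₀ (σ c) = m then ((n:ℕ):ℝ)⁻¹ * R c z else 0) = EgV := by
      calc (∑ m : Fin M, ∑ z : Z, ∑ c : {x : X // x ∈ C},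
            if π₀ (σ c) = m then ((n:ℕ):ℝ)⁻¹ * R c z else 0)
          = ∑ z : Z, ∑ m : Fin M, ∑ c : {x : X // x ∈ C},
            if π₀ (σ c) = m then ((n:ℕ):ℝ)⁻¹ * R c z else 0 := Finset.sum_comm
        _ = ∑ z : Z, ∑ c : {x : X // x ∈ C}, ∑ m : Fin M,
            if π₀ (σ c) = m then ((n:ℕ):ℝ)⁻¹ * R c z else 0 :=
            Finset.sum_congr rfl fun z _ => Finset.sum_comm
        _ = ∑ z : Z, ∑ c : {x : X // x ∈ C}, ((n:ℕ):ℝ)⁻¹ * R c z := by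
            refine Finset.sum_congr rfl fun z _ => Finset.sum_congr rfl fun c _ => ?_
            rw [Finset.sum_ite_eq, if_pos (Finset.mem_univ _)]
        _ = ∑ c : {x : X // x ∈ C}, ∑ z : Z, ((n:ℕ):ℝ)⁻¹ * R c z := Finset.sum_comm
        _ = EgV := hEgV.symm
    have hFsum : (∑ m : Fin M, ∑ z, (M:ℝ)⁻¹ * ∑ c : {x : X // x ∈ C},
        ((n:ℕ):ℝ)⁻¹ * R c z) = EgV := by
      rw [Finset.sum_const, Finset.card_univ, Fintype.card_fin, nsmul_eq_mul,
        ← Finset.mul_sum, ← mul_assoc, mul_inv_cancel₀ hMR.ne', one_mul, Finset.sum_comm, hEgV]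
    have hstep : dTV (fun p : Fin M × Z =>
              ∑ c : {x : X // x ∈ C},
                if π₀ (σ c) = p.1 then PX c.1 * Wch c.1 p.2 else 0)
            (fun p : Fin M × Z => ((M : ℝ))⁻¹ * ∑ x, PX x * Wch x p.2)
        = (1/2) * ∑ m : Fin M, ∑ z,
            |(∑ c : {x : X // x ∈ C}, if π₀ (σ c) = m then PX c.1 * Wch c.1 z else 0)
              - (M:ℝ)⁻¹ * ∑ x, PX x * Wch x z| := by
      rw [dTV, Fintype.sum_prod_type]
    rw [hstep]
    have hle : ∑ m : Fin M, ∑ z,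
          |(∑ c : {x : X // x ∈ C}, if π₀ (σ c) = m then PX c.1 * Wch c.1 z else 0)
            - (M:ℝ)⁻¹ * ∑ x, PX x * Wch x z|
        ≤ (∑ m : Fin M, ∑ z, |D σ m z|) + (EgV + EgV) := by
      calc ∑ m : Fin M, ∑ z,
            |(∑ c : {x : X // x ∈ C}, if π₀ (σ c) = m then PX c.1 * Wch c.1 z else 0)
              - (M:ℝ)⁻¹ * ∑ x, PX x * Wch x z|
          ≤ ∑ m : Fin M, ∑ z, (|D σ m z| + ((∑ c : {x : X // x ∈ C},
                if π₀ (σ c) = m then ((n:ℕ):ℝ)⁻¹ * R c z else 0)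
              + (M:ℝ)⁻¹ * ∑ c : {x : X // x ∈ C}, ((n:ℕ):ℝ)⁻¹ * R c z)) :=
            Finset.sum_le_sum fun m _ => Finset.sum_le_sum fun z _ => hpoint m z
        _ = (∑ m : Fin M, ∑ z, |D σ m z|) + (EgV + EgV) := by
            simp only [Finset.sum_add_distrib]
            rw [hEsum, hFsum]
    linarith [hle]
  -- Claim 3
  have claim3 : ∀ (σ : Equiv.Perm {x : X // x ∈ C}) (m : Fin M),
      ∑ z, |D σ m z| ≤ Real.sqrt (∑ z, (D σ m z)^2 / QZ z) := by
    intro σ m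
    exact aux_cs_sqrt univ _ QZ (fun z _ => hQZpos z) hQZ.2
  -- Claim 4
  have claim4 : ∀ m : Fin M,
      ∑ σ : Equiv.Perm {x : X // x ∈ C}, (∑ z, (D σ m z)^2 / QZ z)
        ≤ Nf * (γ / ((M:ℝ) * (n:ℝ)^2) * Stot) := by
    intro m
    set A : Finset {x : X // x ∈ C} := univ.filter (fun c => π₀ c = m) with hA
    have hAcard : A.card = K := hfib m
    have hκM : ((K:ℕ):ℝ)/((n:ℕ):ℝ) = ((M:ℝ))⁻¹ := by
      rw [hnKM]; push_cast; field_simp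
    have hTQ : ∀ (c : {x : X // x ∈ C}) z, (T c z)^2
        = γ * QZ z * Wch c.1 z * Real.exp (-|Real.log (Wch c.1 z / QZ z) - Real.log γ|) := by
      intro c z
      simp only [hT]
      exact aux_min_sq γ (QZ z) (Wch c.1 z) hγ (hQZpos z) (hWnn c.1 z)
    have hid : ∀ z, ∑ σ : Equiv.Perm {x : X // x ∈ C}, (D σ m z)^2
        ≤ Nf * (M:ℝ)⁻¹ * ∑ c : {x : X // x ∈ C}, (((n:ℕ):ℝ)⁻¹ * T c z)^2 := by
      intro z
      have h := perm_second_moment (α := {x : X // x ∈ C}) A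
          (fun c => ((n:ℕ):ℝ)⁻¹ * T c z)
          (fun c => mul_nonneg (inv_nonneg.2 hnR.le) (hTnn c z))
      rw [hAcard, hcard, hκM, ← hNf] at h
      have hDeq : ∀ σ : Equiv.Perm {x : X // x ∈ C}, D σ m z
          = (∑ c : {x : X // x ∈ C}, if σ c ∈ A then ((n:ℕ):ℝ)⁻¹ * T c z else 0)
            - (M:ℝ)⁻¹ * ∑ c : {x : X // x ∈ C}, ((n:ℕ):ℝ)⁻¹ * T c z := by
        intro σ
        simp only [hD]
        congr 1
        exact Finset.sum_congr rfl fun c _ => by simp [hA]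
      calc ∑ σ : Equiv.Perm {x : X // x ∈ C}, (D σ m z)^2
          = ∑ σ : Equiv.Perm {x : X // x ∈ C},
              ((∑ c : {x : X // x ∈ C}, if σ c ∈ A then ((n:ℕ):ℝ)⁻¹ * T c z else 0)
                - (M:ℝ)⁻¹ * ∑ c : {x : X // x ∈ C}, ((n:ℕ):ℝ)⁻¹ * T c z)^2 :=
            Finset.sum_congr rfl fun σ _ => by rw [hDeq σ]
        _ ≤ Nf * (M:ℝ)⁻¹ * ∑ c : {x : X // x ∈ C}, (((n:ℕ):ℝ)⁻¹ * T c z)^2 := h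
    have hsum : ∑ σ : Equiv.Perm {x : X // x ∈ C}, (∑ z, (D σ m z)^2 / QZ z)
        = ∑ z, (∑ σ : Equiv.Perm {x : X // x ∈ C}, (D σ m z)^2) / QZ z := by
      rw [Finset.sum_comm]
      exact Finset.sum_congr rfl fun z _ => by rw [Finset.sum_div]
    rw [hsum]
    calc ∑ z, (∑ σ : Equiv.Perm {x : X // x ∈ C}, (D σ m z)^2) / QZ z
        ≤ ∑ z, (Nf * (M:ℝ)⁻¹ * ∑ c : {x : X // x ∈ C}, (((n:ℕ):ℝ)⁻¹ * T c z)^2) / QZ z :=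
          Finset.sum_le_sum fun z _ => (div_le_div_iff_of_pos_right (hQZpos z)).2 (hid z)
      _ = Nf * (γ / ((M:ℝ) * (n:ℝ)^2) * Stot) := by
          have hz : ∀ z, (Nf * (M:ℝ)⁻¹ * ∑ c : {x : X // x ∈ C},
                (((n:ℕ):ℝ)⁻¹ * T c z)^2) / QZ z
              = ∑ c : {x : X // x ∈ C}, Nf * (γ / ((M:ℝ) * (n:ℝ)^2)) *
                  (Wch c.1 z * Real.exp (-|Real.log (Wch c.1 z / QZ z) - Real.log γ|)) := by
            intro z
            rw [Finset.mul_sum, Finset.sum_div]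
            refine Finset.sum_congr rfl fun c _ => ?_
            rw [mul_pow, hTQ c z]
            have hq := (hQZpos z).ne'
            have hn2 : ((n:ℕ):ℝ) ≠ 0 := hnR.ne'
            have hm0 : ((M:ℕ):ℝ) ≠ 0 := hMR.ne'
            field_simp
          rw [Finset.sum_congr rfl fun z _ => hz z, Finset.sum_comm]
          simp only [← Finset.mul_sum]
          rw [← hStot]
          ring
  -- Claim 5 : assemble
  rw [claim1]
  set B : ℝ := γ / ((M:ℝ) * (n:ℝ)^2) * Stot with hB
  have hBnn : 0 ≤ B := by
    rw [hB]
    exact mul_nonneg (div_nonneg hγ.le (by positivity)) hStotnn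
  have hGnn : ∀ (σ : Equiv.Perm {x : X // x ∈ C}) (m : Fin M),
      0 ≤ ∑ z, (D σ m z)^2 / QZ z :=
    fun σ m => Finset.sum_nonneg fun z _ => div_nonneg (sq_nonneg _) (hQZpos z).le
  have hcardPerm : (((univ : Finset (Equiv.Perm {x : X // x ∈ C})).card : ℕ) : ℝ) = Nf := by
    rw [Finset.card_univ, Fintype.card_perm, hcard, hNf]
  have habs : ∑ σ : Equiv.Perm {x : X // x ∈ C}, ∑ m : Fin M, ∑ z, |D σ m z|
      ≤ (M:ℝ) * (Nf * Real.sqrt B) := by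
    calc ∑ σ : Equiv.Perm {x : X // x ∈ C}, ∑ m : Fin M, ∑ z, |D σ m z|
        ≤ ∑ σ : Equiv.Perm {x : X // x ∈ C}, ∑ m : Fin M,
            Real.sqrt (∑ z, (D σ m z)^2 / QZ z) :=
          Finset.sum_le_sum fun σ _ => Finset.sum_le_sum fun m _ => claim3 σ m
      _ = ∑ m : Fin M, ∑ σ : Equiv.Perm {x : X // x ∈ C},
            Real.sqrt (∑ z, (D σ m z)^2 / QZ z) := Finset.sum_comm
      _ ≤ ∑ m : Fin M, Real.sqrt (Nf * (Nf * B)) := by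
          refine Finset.sum_le_sum fun m _ => ?_
          calc ∑ σ : Equiv.Perm {x : X // x ∈ C},
                Real.sqrt (∑ z, (D σ m z)^2 / QZ z)
              ≤ Real.sqrt ((((univ : Finset (Equiv.Perm {x : X // x ∈ C})).card : ℕ) : ℝ)
                  * ∑ σ : Equiv.Perm {x : X // x ∈ C}, ∑ z, (D σ m z)^2 / QZ z) :=
                aux_sum_sqrt univ _ (fun σ _ => hGnn σ m)
            _ ≤ Real.sqrt (Nf * (Nf * B)) := by
                rw [hcardPerm]
                apply Real.sqrt_le_sqrt
                exact mul_le_mul_of_nonneg_left (claim4 m) hNfpos.le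
      _ = (M:ℝ) * (Nf * Real.sqrt B) := by
          rw [Finset.sum_const, Finset.card_univ, Fintype.card_fin, nsmul_eq_mul]
          congr 1
          rw [← mul_assoc, ← sq, Real.sqrt_mul (sq_nonneg Nf), Real.sqrt_sq hNfpos.le]
  have hsq : Real.sqrt ((γ/(K:ℝ)) * ∑ x ∈ C, ∑ z, PX x * Wch x z *
        Real.exp (-|Real.log (Wch x z / QZ z) - Real.log γ|)) = (M:ℝ) * Real.sqrt B := by
    have hCS : ∑ x ∈ C, ∑ z, PX x * Wch x z *
          Real.exp (-|Real.log (Wch x z / QZ z) - Real.log γ|) = ((n:ℕ):ℝ)⁻¹ * Stot := by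
      rw [← Finset.sum_coe_sort C, hStot, Finset.mul_sum]
      refine Finset.sum_congr rfl fun c _ => ?_
      rw [Finset.mul_sum]
      refine Finset.sum_congr rfl fun z _ => ?_
      rw [hPXval c]; ring
    have hMB : (M:ℝ) * Real.sqrt B = Real.sqrt ((M:ℝ)^2 * B) := by
      rw [Real.sqrt_mul (sq_nonneg _), Real.sqrt_sq hMR.le]
    rw [hCS, hMB]
    congr 1
    rw [hB, hnKM]
    push_cast
    field_simp
  rw [hsq]
  calc (∑ σ : Equiv.Perm {x : X // x ∈ C},
        dTV (fun p : Fin M × Z =>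
              ∑ c : {x : X // x ∈ C},
                if π₀ (σ c) = p.1 then PX c.1 * Wch c.1 p.2 else 0)
            (fun p : Fin M × Z => ((M : ℝ))⁻¹ * ∑ x, PX x * Wch x p.2)) / Nf
      ≤ (∑ σ : Equiv.Perm {x : X // x ∈ C},
          (EgV + (1/2) * ∑ m : Fin M, ∑ z, |D σ m z|)) / Nf :=
        (div_le_div_iff_of_pos_right hNfpos).2 (Finset.sum_le_sum fun σ _ => claim2 σ)
    _ = EgV + (1/2) * ((∑ σ : Equiv.Perm {x : X // x ∈ C},
          ∑ m : Fin M, ∑ z, |D σ m z|) / Nf) := by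
        rw [Finset.sum_add_distrib, Finset.sum_const, nsmul_eq_mul, hcardPerm,
          ← Finset.mul_sum, add_div, mul_div_cancel_left₀ _ hNfpos.ne', mul_div_assoc]
    _ ≤ EgV + (1/2) * (((M:ℝ) * (Nf * Real.sqrt B)) / Nf) := by
        apply add_le_add_right
        apply mul_le_mul_of_nonneg_left _ (by norm_num : (0:ℝ) ≤ 1/2)
        exact (div_le_div_iff_of_pos_right hNfpos).2 habs
    _ = EgV + (1/2) * ((M:ℝ) * Real.sqrt B) := by
        congr 1
        congr 1
        field_simp
end
end

section
/- Let X and Z be finite nonempty sets, P_{Z|X} a channel from X to Z, P_X a PMF on X, Q_Z a PMF on Z, and γ > 0. Then E_γ(P_X × P_{Z|X}, P_X × Q_Z) = Σ_{x∈X} P_X(x)·E_γ(P_{Z|X=x}, Q_Z), and consequently E_γ(P_X × P_{Z|X}, P_X × Q_Z) ≤ max_{x ∈ supp(P_X)} E_γ(P_{Z|X=x}, Q_Z), where supp(P_X) := {x : P_X(x) > 0}. -/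
open scoped Classical
open Finset

noncomputable section

/-- Linearity of `P_X ↦ E_γ(P_X P_{Z|X}, P_X Q_Z)`:
`E_γ(P_X P_{Z|X}, P_X Q_Z) = ∑_x P_X(x) E_γ(P_{Z|X=x}, Q_Z)`, and consequently it
is bounded by the maximum of `E_γ(P_{Z|X=x}, Q_Z)` over the support of `P_X`. -/
theorem stmt16 {X Z : Type*} [Fintype X] [Fintype Z] [Nonempty X] [Nonempty Z]
    (Wch : X → Z → ℝ) (hW : ∀ x, IsPMF (Wch x))
    (PX : X → ℝ) (hPX : IsPMF PX)
    (QZ : Z → ℝ) (hQZ : IsPMF QZ)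
    (γ : ℝ) (hγ : 0 < γ) :
    Egam γ (fun p : X × Z => PX p.1 * Wch p.1 p.2)
        (fun p : X × Z => PX p.1 * QZ p.2)
      = ∑ x, PX x * Egam γ (Wch x) QZ
    ∧ Egam γ (fun p : X × Z => PX p.1 * Wch p.1 p.2)
        (fun p : X × Z => PX p.1 * QZ p.2)
      ≤ sSup ((fun x => Egam γ (Wch x) QZ) '' {x | 0 < PX x}) := by
  have hEq : Egam γ (fun p : X × Z => PX p.1 * Wch p.1 p.2)
        (fun p : X × Z => PX p.1 * QZ p.2)
      = ∑ x, PX x * Egam γ (Wch x) QZ := by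
    unfold Egam
    rw [Finset.sum_filter, Fintype.sum_prod_type]
    refine Finset.sum_congr rfl fun x _ => ?_
    rw [Finset.mul_sum, Finset.sum_filter]
    refine Finset.sum_congr rfl fun z _ => ?_
    rcases (hPX.1 x).eq_or_lt with h0 | hpos
    · simp [← h0]
    · have hc : (γ * (PX x * QZ z) ≤ PX x * Wch x z) ↔ (γ * QZ z ≤ Wch x z) := by
        rw [show γ * (PX x * QZ z) = PX x * (γ * QZ z) by ring]
        exact mul_le_mul_iff_right₀ hpos
      by_cases h : γ * QZ z ≤ Wch x z
      · rw [if_pos (hc.mpr h), if_pos h]; ring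
      · rw [if_neg (fun hh => h (hc.mp hh)), if_neg h]
  refine ⟨hEq, ?_⟩
  rw [hEq]
  set S := (fun x => Egam γ (Wch x) QZ) '' {x | 0 < PX x} with hS
  have hfin : S.Finite := Set.Finite.image _ (Set.toFinite _)
  have hne : S.Nonempty := by
    have : ∃ x, 0 < PX x := by
      by_contra h
      push_neg at h
      have : ∑ x, PX x = 0 := Finset.sum_eq_zero fun x _ => le_antisymm (h x) (hPX.1 x)
      rw [hPX.2] at this; norm_num at this
    obtain ⟨x, hx⟩ := this
    exact ⟨_, ⟨x, hx, rfl⟩⟩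
  have hbdd : BddAbove S := hfin.bddAbove
  have hle : ∀ x, 0 < PX x → Egam γ (Wch x) QZ ≤ sSup S := fun x hx =>
    le_csSup hbdd ⟨x, hx, rfl⟩
  calc ∑ x, PX x * Egam γ (Wch x) QZ ≤ ∑ x, PX x * sSup S := by
        refine Finset.sum_le_sum fun x _ => ?_
        rcases (hPX.1 x).eq_or_lt with h0 | hpos
        · rw [← h0]; simp
        · exact mul_le_mul_of_nonneg_left (hle x hpos) hpos.le
    _ = sSup S := by rw [← Finset.sum_mul, hPX.2, one_mul]
end
end
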